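/- Let N ≥ 1 be a natural number, Z ∈ ℂ, and Q ∈ ℂ with 0 < ‖Q‖ < 1, and suppose 1 + Z·Q^j ≠ 0 for all j ∈ ℤ. For l ∈ ℤ define σ_l := ∏_{n=1}^{∞} (1 + Z·Q^{l+nN})^{−n} (the product is multipliable since ‖Q^N‖ < 1). Then for all l ∈ ℤ: (1 + Z·Q^l)·σ_{l+N}·σ_{l−N} = σ_l². Consequently, the constant-in-j family σ_{j,l} := σ_l (j ∈ ℤ/Nℤ) solves the Y^{N,N} bilinear system σ_{j,l+N}·σ_{j,l−N} = σ_{j,l}² − Z·Q^l·σ_{j+1,l+N}·σ_{j−1,l−N}. -/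

import Mathlib

/-- The j-independent twisted-field tau-function
`σ_l = ∏_{n=1}^∞ (1 + Z·Q^{l+nN})^{−n}` of the `Y^{N,N}` system. -/
noncomputable def twistTauYNN (N : ℕ) (Z Q : ℂ) (l : ℤ) : ℂ :=
  ∏' n : ℕ, (1 + Z * Q ^ (l + (n + 1) * (N : ℤ))) ^ (-(n + 1 : ℤ))

open Complex

set_option maxHeartbeats 1000000

private lemma twistAux_summable (N : ℕ) (hN : 1 ≤ N) (Z Q : ℂ)
    (hQ0 : 0 < ‖Q‖) (hQ1 : ‖Q‖ < 1) (l : ℤ) :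
    Summable (fun n : ℕ =>
      (-((n : ℂ) + 1)) * Complex.log (1 + Z * Q ^ (l + ((n : ℤ) + 1) * (N : ℤ)))) := by
  have hQne : (‖Q‖ : ℝ) ≠ 0 := ne_of_gt hQ0
  set C : ℝ := ‖Z‖ * ‖Q‖ ^ l with hC
  set r : ℝ := ‖Q‖ ^ N with hr
  have hr0 : 0 ≤ r := pow_nonneg (norm_nonneg Q) N
  have hr1 : r < 1 := pow_lt_one₀ (norm_nonneg Q) hQ1 (by omega)
  -- norm of the inner term
  have hx : ∀ n : ℕ, ‖Z * Q ^ (l + ((n : ℤ) + 1) * (N : ℤ))‖ = C * r ^ (n + 1) := by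
    intro n
    rw [norm_mul, norm_zpow]
    have : l + ((n : ℤ) + 1) * (N : ℤ) = l + (((n + 1) * N : ℕ) : ℤ) := by push_cast; ring
    rw [this, zpow_add₀ hQne, zpow_natCast, pow_mul', hC, hr]
    ring
  -- summable majorant
  have hgeo : Summable (fun n : ℕ => ((n : ℝ) + 1) * ((3 / 2) * (C * r ^ (n + 1)))) := by
    have h1 : Summable (fun n : ℕ => (n : ℝ) ^ 1 * r ^ n) :=
      summable_pow_mul_geometric_of_norm_lt_one 1 (by rwa [Real.norm_eq_abs, _root_.abs_of_nonneg hr0])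
    have h2 : Summable (fun n : ℕ => ((n + 1 : ℕ) : ℝ) ^ 1 * r ^ (n + 1)) :=
      (_root_.summable_nat_add_iff (f := fun n : ℕ => (n : ℝ) ^ 1 * r ^ n) 1).2 h1
    have h3 := h2.mul_left ((3 / 2) * C)
    refine h3.congr fun n => ?_
    push_cast
    ring
  -- eventual bound
  have htend : Filter.Tendsto (fun n : ℕ => C * r ^ (n + 1)) Filter.atTop (nhds 0) := by
    have := tendsto_pow_atTop_nhds_zero_of_lt_one hr0 hr1
    have h' := ((this.comp (Filter.tendsto_add_atTop_nat 1)).const_mul C)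
    simpa using h'
  have hev : ∀ᶠ n : ℕ in Filter.atTop, C * r ^ (n + 1) ≤ 1 / 2 :=
    (htend.eventually_le_const (by norm_num : (0 : ℝ) < 1 / 2))
  apply Summable.of_norm_bounded_eventually_nat hgeo
  filter_upwards [hev] with n hn
  rw [norm_mul]
  have hnorm1 : ‖(-((n : ℂ) + 1))‖ = (n : ℝ) + 1 := by
    rw [norm_neg]
    have : ((n : ℂ) + 1) = ((n + 1 : ℕ) : ℂ) := by push_cast; ring
    rw [this, Complex.norm_natCast]
    push_cast; ring
  rw [hnorm1]
  have hxle : ‖Z * Q ^ (l + ((n : ℤ) + 1) * (N : ℤ))‖ ≤ 1 / 2 := by rw [hx n]; exact hn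
  have hlog := Complex.norm_log_one_add_half_le_self hxle
  calc ((n : ℝ) + 1) * ‖Complex.log (1 + Z * Q ^ (l + ((n : ℤ) + 1) * (N : ℤ)))‖
      ≤ ((n : ℝ) + 1) * ((3 / 2) * ‖Z * Q ^ (l + ((n : ℤ) + 1) * (N : ℤ))‖) := by
        apply mul_le_mul_of_nonneg_left _ (by positivity)
        exact hlog
    _ = ((n : ℝ) + 1) * ((3 / 2) * (C * r ^ (n + 1))) := by rw [hx n]

private lemma twistAux_hasProd (N : ℕ) (hN : 1 ≤ N) (Z Q : ℂ)
    (hQ0 : 0 < ‖Q‖) (hQ1 : ‖Q‖ < 1)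
    (hZ : ∀ j : ℤ, 1 + Z * Q ^ j ≠ 0) (l : ℤ) :
    HasProd (fun n : ℕ => (1 + Z * Q ^ (l + (n + 1) * (N : ℤ))) ^ (-(n + 1 : ℤ)))
      (Complex.exp (∑' n : ℕ,
        (-((n : ℂ) + 1)) * Complex.log (1 + Z * Q ^ (l + ((n : ℤ) + 1) * (N : ℤ))))) := by
  have hsum := twistAux_summable N hN Z Q hQ0 hQ1 l
  have h := hsum.hasSum.cexp
  refine h.congr_fun fun n => ?_
  simp only [Function.comp_apply]
  have hcast : (-((n : ℂ) + 1)) = ((-(n + 1 : ℤ) : ℤ) : ℂ) := by push_cast; ring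
  rw [hcast, Complex.exp_int_mul, Complex.exp_log (hZ _)]

private lemma twistTau_eq_exp (N : ℕ) (hN : 1 ≤ N) (Z Q : ℂ)
    (hQ0 : 0 < ‖Q‖) (hQ1 : ‖Q‖ < 1)
    (hZ : ∀ j : ℤ, 1 + Z * Q ^ j ≠ 0) (l : ℤ) :
    twistTauYNN N Z Q l = Complex.exp (∑' n : ℕ,
      (-((n : ℂ) + 1)) * Complex.log (1 + Z * Q ^ (l + ((n : ℤ) + 1) * (N : ℤ)))) :=
  (twistAux_hasProd N hN Z Q hQ0 hQ1 hZ l).tprod_eq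

/-- The products `σ_l = ∏_{n=1}^∞ (1 + Z·Q^{l+nN})^{−n}` are multipliable, satisfy
`(1 + Z·Q^l)·σ_{l+N}·σ_{l−N} = σ_l²`, and hence the constant-in-`j` family
`σ_{j,l} = σ_l` solves the `Y^{N,N}` bilinear system
`σ_{j,l+N}·σ_{j,l−N} = σ_{j,l}² − Z·Q^l·σ_{j+1,l+N}·σ_{j−1,l−N}`. -/
theorem twistTau_solves_YNN (N : ℕ) (hN : 1 ≤ N) (Z Q : ℂ)
    (hQ0 : 0 < ‖Q‖) (hQ1 : ‖Q‖ < 1)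
    (hZ : ∀ j : ℤ, 1 + Z * Q ^ j ≠ 0)
    (S : ZMod N → ℤ → ℂ) (hS : ∀ (j : ZMod N) (l : ℤ), S j l = twistTauYNN N Z Q l) :
    (∀ l : ℤ, Multipliable fun n : ℕ =>
      (1 + Z * Q ^ (l + (n + 1) * (N : ℤ))) ^ (-(n + 1 : ℤ))) ∧
    (∀ l : ℤ, (1 + Z * Q ^ l) * (twistTauYNN N Z Q (l + N) * twistTauYNN N Z Q (l - N)) =
      (twistTauYNN N Z Q l) ^ 2) ∧
    (∀ (j : ZMod N) (l : ℤ), S j (l + N) * S j (l - N) =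
      (S j l) ^ 2 - Z * Q ^ l * S (j + 1) (l + N) * S (j - 1) (l - N)) := by
  have key : ∀ l : ℤ,
      (1 + Z * Q ^ l) * (twistTauYNN N Z Q (l + N) * twistTauYNN N Z Q (l - N)) =
        (twistTauYNN N Z Q l) ^ 2 := by
    intro l
    -- b m = log (1 + Z Q^{l + m N})
    set b : ℕ → ℂ := fun m => Complex.log (1 + Z * Q ^ (l + (m : ℤ) * (N : ℤ))) with hb
    -- the three relevant summable families
    have hsuml : Summable (fun n : ℕ => (-((n : ℂ) + 1)) * b (n + 1)) := by
      refine (twistAux_summable N hN Z Q hQ0 hQ1 l).congr fun n => ?_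
      have : l + ((n : ℤ) + 1) * (N : ℤ) = l + (((n + 1 : ℕ) : ℤ)) * (N : ℤ) := by
        push_cast; ring
      rw [hb, this]
    have hsumm : Summable (fun n : ℕ => (-((n : ℂ) + 1)) * b n) := by
      refine (twistAux_summable N hN Z Q hQ0 hQ1 (l - N)).congr fun n => ?_
      have : l - (N : ℤ) + ((n : ℤ) + 1) * (N : ℤ) = l + ((n : ℤ)) * (N : ℤ) := by ring
      rw [hb, this]
    have hsump : Summable (fun n : ℕ => (-((n : ℂ) + 1)) * b (n + 2)) := by
      refine (twistAux_summable N hN Z Q hQ0 hQ1 (l + N)).congr fun n => ?_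
      have : l + (N : ℤ) + ((n : ℤ) + 1) * (N : ℤ) = l + (((n + 2 : ℕ) : ℤ)) * (N : ℤ) := by
        push_cast; ring
      rw [hb, this]
    -- auxiliary families
    set SA : ℕ → ℂ := fun n => (-(n : ℂ)) * b (n + 1) with hSA
    set SB : ℕ → ℂ := fun n => (-((n : ℂ) + 2)) * b (n + 1) with hSB
    have hSAsum : Summable SA := by
      rw [← _root_.summable_nat_add_iff 1]
      refine hsump.congr fun n => ?_
      simp only [hSA]
      push_cast; ring_nf
    have hSBsum : Summable SB := by
      have := (_root_.summable_nat_add_iff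
        (f := fun n : ℕ => (-((n : ℂ) + 1)) * b n) 1).2 hsumm
      refine this.congr fun n => ?_
      simp only [hSB]
      push_cast; ring_nf
    -- tsum identities
    set T : ℂ := ∑' n : ℕ, (-((n : ℂ) + 1)) * b (n + 1) with hT
    have hTp : (∑' n : ℕ, (-((n : ℂ) + 1)) * b (n + 2)) = ∑' n, SA n := by
      rw [Summable.tsum_eq_zero_add hSAsum]
      simp only [hSA, Nat.cast_zero, neg_zero, zero_mul, zero_add]
      exact tsum_congr fun n => by push_cast; ring_nf
    have hTm : (∑' n : ℕ, (-((n : ℂ) + 1)) * b n) = -b 0 + ∑' n, SB n := by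
      rw [Summable.tsum_eq_zero_add hsumm]
      have h0 : -(((0 : ℕ) : ℂ) + 1) * b 0 = -b 0 := by norm_num
      have h1 : (∑' n : ℕ, -(((n + 1 : ℕ) : ℂ) + 1) * b (n + 1)) = ∑' n, SB n :=
        tsum_congr fun n => by simp only [hSB]; push_cast; ring_nf
      rw [h0, h1]
    have hAB : (∑' n, SA n) + (∑' n, SB n) = 2 * T := by
      rw [← Summable.tsum_add hSAsum hSBsum, hT, ← tsum_mul_left]
      refine tsum_congr fun n => ?_
      simp only [hSA, hSB]
      ring
    -- the sum identity
    have hsum_id : (∑' n : ℕ, (-((n : ℂ) + 1)) * b (n + 2))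
        + (∑' n : ℕ, (-((n : ℂ) + 1)) * b n) + b 0 = 2 * T := by
      rw [hTp, hTm, ← hAB]; ring
    -- rewrite the tau functions as exponentials
    have hτl : twistTauYNN N Z Q l = Complex.exp T := by
      rw [twistTau_eq_exp N hN Z Q hQ0 hQ1 hZ l, hT]
      exact congrArg Complex.exp (tsum_congr fun n => by
        rw [hb, show l + ((n : ℤ) + 1) * (N : ℤ) = l + (((n + 1 : ℕ) : ℤ)) * (N : ℤ) by
          push_cast; ring])
    have hτp : twistTauYNN N Z Q (l + N)
        = Complex.exp (∑' n : ℕ, (-((n : ℂ) + 1)) * b (n + 2)) := by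
      rw [twistTau_eq_exp N hN Z Q hQ0 hQ1 hZ (l + N)]
      exact congrArg Complex.exp (tsum_congr fun n => by
        rw [hb, show l + (N : ℤ) + ((n : ℤ) + 1) * (N : ℤ)
            = l + (((n + 2 : ℕ) : ℤ)) * (N : ℤ) by push_cast; ring])
    have hτm : twistTauYNN N Z Q (l - N)
        = Complex.exp (∑' n : ℕ, (-((n : ℂ) + 1)) * b n) := by
      rw [twistTau_eq_exp N hN Z Q hQ0 hQ1 hZ (l - N)]
      exact congrArg Complex.exp (tsum_congr fun n => by
        rw [hb, show l - (N : ℤ) + ((n : ℤ) + 1) * (N : ℤ) = l + ((n : ℤ)) * (N : ℤ) by ring])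
    have hb0 : (1 + Z * Q ^ l) = Complex.exp (b 0) := by
      rw [hb]
      simp only [Nat.cast_zero, zero_mul, add_zero]
      rw [Complex.exp_log (hZ l)]
    rw [hτl, hτp, hτm, hb0, ← Complex.exp_add, ← Complex.exp_add, sq, ← Complex.exp_add]
    congr 1
    linear_combination hsum_id
  refine ⟨fun l => (twistAux_hasProd N hN Z Q hQ0 hQ1 hZ l).multipliable, key, ?_⟩
  intro j l
  simp only [hS]
  linear_combination key l
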